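/- Let α, β, τ, α₁, β₁, α₂, β₂ be real numbers with β ≠ 0, β₁ ≠ 0 and β² > α². Set D = (β²τ² + 1)(α² + β²) − 4αβ²τ (then D > 0). Define κ₁ = β·τ·(α² − β²)·(β²τ² + ατ − 2)/D^{3/2}, κ₂ = (ατ − 1)²·β²·(β(ατ − 1)·α₂ + (α − β²τ)·β₂)/(β₁²·D^{3/2}), and G = (ατ − 1)³·β²·α₂ + β·(ατ − 1)²·(α − β²τ)·β₂ − β₁²·τ·(α² − β²)·(β²τ² + ατ − 2). Then κ₁ − κ₂ = −β·G/(β₁²·D^{3/2}). In particular, κ₁ = κ₂ if and only if G = 0. -/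
import Mathlib


/-- With D = (β²τ²+1)(α²+β²) − 4αβ²τ > 0, the difference of the signed
curvatures κ₁ (Hopf curve) and κ₂ (parameter path) equals −β·G/(β₁²·D^{3/2}), where G
is the curvature nondegeneracy quantity; in particular κ₁ = κ₂ iff G = 0. -/
theorem stmt2 (α β τ α₁ β₁ α₂ β₂ : ℝ) (hβ : β ≠ 0) (hβ₁ : β₁ ≠ 0)
    (hαβ : α ^ 2 < β ^ 2) :
    let D : ℝ := (β ^ 2 * τ ^ 2 + 1) * (α ^ 2 + β ^ 2) - 4 * α * β ^ 2 * τ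
    let κ₁ : ℝ := β * τ * (α ^ 2 - β ^ 2) * (β ^ 2 * τ ^ 2 + α * τ - 2) / D ^ ((3 : ℝ) / 2)
    let κ₂ : ℝ := (α * τ - 1) ^ 2 * β ^ 2 * (β * (α * τ - 1) * α₂ + (α - β ^ 2 * τ) * β₂) /
      (β₁ ^ 2 * D ^ ((3 : ℝ) / 2))
    let G : ℝ := (α * τ - 1) ^ 3 * β ^ 2 * α₂ + β * (α * τ - 1) ^ 2 * (α - β ^ 2 * τ) * β₂ -
      β₁ ^ 2 * τ * (α ^ 2 - β ^ 2) * (β ^ 2 * τ ^ 2 + α * τ - 2)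
    0 < D ∧
    κ₁ - κ₂ = -β * G / (β₁ ^ 2 * D ^ ((3 : ℝ) / 2)) ∧
    (κ₁ = κ₂ ↔ G = 0) := by
  intro D κ₁ κ₂ G
  have hD : 0 < D := by
    have hsum : D = (α - β ^ 2 * τ) ^ 2 + β ^ 2 * (α * τ - 1) ^ 2 := by
      show ((β ^ 2 * τ ^ 2 + 1) * (α ^ 2 + β ^ 2) - 4 * α * β ^ 2 * τ) = _
      ring
    rw [hsum]
    rcases eq_or_ne (α * τ - 1) 0 with h1 | h1
    · have hα : α * τ = 1 := by linarith
      have h2 : α - β ^ 2 * τ ≠ 0 := by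
        intro h
        have hατ : α = β ^ 2 * τ := by linarith
        have : α ^ 2 = β ^ 2 * (α * τ) := by rw [hατ]; ring
        rw [hα, mul_one] at this
        linarith
      have := sq_pos_of_ne_zero h2
      nlinarith [sq_nonneg (α * τ - 1)]
    · have := sq_pos_of_ne_zero h1
      nlinarith [sq_nonneg (α - β ^ 2 * τ), sq_pos_of_ne_zero hβ]
  have hd : (0 : ℝ) < D ^ ((3 : ℝ) / 2) := Real.rpow_pos_of_pos hD _
  have hd' : D ^ ((3 : ℝ) / 2) ≠ 0 := ne_of_gt hd
  have hb1 : β₁ ^ 2 ≠ 0 := pow_ne_zero _ hβ₁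
  have key : κ₁ - κ₂ = -β * G / (β₁ ^ 2 * D ^ ((3 : ℝ) / 2)) := by
    show β * τ * (α ^ 2 - β ^ 2) * (β ^ 2 * τ ^ 2 + α * τ - 2) / D ^ ((3 : ℝ) / 2) -
      (α * τ - 1) ^ 2 * β ^ 2 * (β * (α * τ - 1) * α₂ + (α - β ^ 2 * τ) * β₂) /
        (β₁ ^ 2 * D ^ ((3 : ℝ) / 2)) = _
    field_simp
    ring
  refine ⟨hD, key, ?_⟩
  rw [← sub_eq_zero, key, div_eq_zero_iff]
  constructor
  · rintro (h | h)
    · rcases mul_eq_zero.mp h with h | h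
      · exact absurd (neg_eq_zero.mp h) hβ
      · exact h
    · exact absurd h (mul_ne_zero hb1 hd')
  · intro h
    left
    rw [h, mul_zero]
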